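/- Let S be a Gaussian local ring and let 𝔞 be an ideal of S. Then 𝔞² = 0 if and only if a² = 0 for every a ∈ 𝔞. -/
import Mathlib

/-- The content ideal of a polynomial: the ideal generated by its coefficients. -/
def contentIdeal {R : Type*} [CommRing R] (p : Polynomial R) : Ideal R :=
  Ideal.span (Set.range p.coeff)

/-- A commutative ring is Gaussian if the content ideal is multiplicative:
`c(pq) = c(p)c(q)` for all polynomials `p, q`. -/
def IsGaussianRing (R : Type*) [CommRing R] : Prop :=
  ∀ p q : Polynomial R, contentIdeal (p * q) = contentIdeal p * contentIdeal q

/-- In a Gaussian local ring, an ideal `𝔞` satisfies `𝔞² = 0` iff `a² = 0` for all `a ∈ 𝔞`. -/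
theorem sq_ideal_eq_bot_iff {S : Type*} [CommRing S]
    (hG : IsGaussianRing S) (hloc : IsLocalRing S) (𝔞 : Ideal S) :
    𝔞 ^ 2 = ⊥ ↔ ∀ a ∈ 𝔞, a ^ 2 = 0 := by
  constructor
  · intro h a ha
    have : a ^ 2 ∈ 𝔞 ^ 2 := Ideal.pow_mem_pow ha 2
    rwa [h, Ideal.mem_bot] at this
  · intro h
    rw [pow_two, eq_bot_iff]
    refine Ideal.mul_le.mpr fun a ha b hb => ?_
    rw [Ideal.mem_bot]
    set p : Polynomial S := Polynomial.C a * Polynomial.X + Polynomial.C b with hp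
    set q : Polynomial S := Polynomial.C b - Polynomial.C a * Polynomial.X with hq
    have hpq : p * q = 0 := by
      have ha2 : a ^ 2 = 0 := h a ha
      have hb2 : b ^ 2 = 0 := h b hb
      rw [hp, hq]
      ring_nf
      rw [← Polynomial.C_pow, ← Polynomial.C_pow, ha2, hb2]
      simp
    have key := hG p q
    rw [hpq] at key
    have hzero : contentIdeal (0 : Polynomial S) = ⊥ := by
      have hc : (Polynomial.coeff (0 : Polynomial S)) = fun _ => 0 := by
        funext n; simp
      simp [contentIdeal, hc]
    rw [hzero] at key
    have hap : a ∈ contentIdeal p := by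
      apply Ideal.subset_span
      exact ⟨1, by simp [hp]⟩
    have hbq : b ∈ contentIdeal q := by
      apply Ideal.subset_span
      exact ⟨0, by simp [hq]⟩
    have : a * b ∈ contentIdeal p * contentIdeal q := Ideal.mul_mem_mul hap hbq
    rwa [← key, Ideal.mem_bot] at this
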